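/- In the setting of the previous statement (R a ℚ-algebra, M₀ an R-module, N₀ nilpotent, M = M₀[ℓ] with N = N₀ ⊗ id + id ⊗ ∂/∂ℓ), the kernel of N on M equals exactly the image of the map ψ : M₀ → M, ψ(x) = Σ_{i=0}^{m} ((−N₀)^i(x)/i!) ℓ^i, and ψ is injective; hence ker(N) ≅ M₀ as R-modules. -/

import Mathlib

open TensorProduct Polynomial

noncomputable section

variable (R : Type) [CommRing R] [Algebra ℚ R]
variable (M₀ : Type) [AddCommGroup M₀] [Module R M₀]

/-- The operator `N = id ⊗ N₀ + ∂/∂ℓ ⊗ id` on `M = R[ℓ] ⊗_R M₀ = M₀[ℓ]`, sending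
`Σ xᵢ ℓ^i` to `Σ (N₀(xᵢ) + (i+1)·x_{i+1}) ℓ^i`. -/
def NOp (N₀ : M₀ →ₗ[R] M₀) :
    (Polynomial R ⊗[R] M₀) →ₗ[R] (Polynomial R ⊗[R] M₀) :=
  TensorProduct.map LinearMap.id N₀ +
    TensorProduct.map (Polynomial.derivative : Polynomial R →ₗ[R] Polynomial R) LinearMap.id

/-- The section `ψ : M₀ → M₀[ℓ]`, `ψ(x) = Σ_{i=0}^{m} ((−N₀)^i(x)/i!) ℓ^i`. -/
def psiMap (N₀ : M₀ →ₗ[R] M₀) (m : ℕ) (x : M₀) : Polynomial R ⊗[R] M₀ :=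
  ∑ i ∈ Finset.range (m + 1),
    (algebraMap ℚ R ((Nat.factorial i : ℚ)⁻¹)) •
      ((Polynomial.X ^ i : Polynomial R) ⊗ₜ[R] (((-N₀) ^ i) x))

set_option linter.unusedSectionVars false

/-- Coefficient-extraction equivalence `R[X] ⊗ M₀ ≃ (ℕ →₀ M₀)`. -/
def EE : (Polynomial R ⊗[R] M₀) ≃ₗ[R] (ℕ →₀ M₀) :=
  (TensorProduct.congr ((Polynomial.toFinsuppIsoAlg R).toLinearEquiv.trans (AddMonoidAlgebra.coeffLinearEquiv R)) (LinearEquiv.refl R M₀)).trans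
    (TensorProduct.finsuppScalarLeft R M₀ ℕ)

lemma EE_tmul (p : Polynomial R) (x : M₀) (i : ℕ) :
    EE R M₀ (p ⊗ₜ[R] x) i = p.coeff i • x := by
  simp only [EE, LinearEquiv.trans_apply, TensorProduct.congr_tmul, LinearEquiv.refl_apply]
  exact TensorProduct.finsuppScalarLeft_apply_tmul_apply _ x i

lemma EE_NOp (N₀ : M₀ →ₗ[R] M₀) (y : Polynomial R ⊗[R] M₀) (i : ℕ) :
    EE R M₀ (NOp R M₀ N₀ y) i = N₀ (EE R M₀ y i) + (i + 1 : ℕ) • EE R M₀ y (i + 1) := by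
  induction y using TensorProduct.induction_on with
  | zero => simp
  | tmul p x =>
      simp only [NOp, LinearMap.add_apply, TensorProduct.map_tmul, LinearMap.id_coe, id_eq,
        map_add, Finsupp.add_apply, EE_tmul, Polynomial.coeff_derivative, map_smul]
      congr 1
      rw [← Nat.cast_smul_eq_nsmul R, smul_smul]; push_cast; ring_nf
  | add a b ha hb =>
      simp only [map_add, Finsupp.add_apply, ha, hb, smul_add]
      abel

lemma EE_psi (N₀ : M₀ →ₗ[R] M₀) (m : ℕ) (x : M₀) (i : ℕ) :
    EE R M₀ (psiMap R M₀ N₀ m x) i =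
      if i ≤ m then (algebraMap ℚ R ((Nat.factorial i : ℚ)⁻¹)) • (((-N₀) ^ i) x) else 0 := by
  have key : ∀ j : ℕ,
      (algebraMap ℚ R ((Nat.factorial j : ℚ)⁻¹)) • ((if i = j then (1:R) else 0) • ((-N₀) ^ j) x)
        = if i = j then (algebraMap ℚ R ((Nat.factorial j : ℚ)⁻¹)) • ((-N₀) ^ j) x else 0 := by
    intro j; split <;> simp
  simp only [psiMap, map_sum, map_smul, Finset.sum_apply', Finsupp.smul_apply, EE_tmul,
    Polynomial.coeff_X_pow]
  rw [Finset.sum_congr rfl fun j _ => key j, Finset.sum_ite_eq]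
  simp [Nat.lt_succ_iff]

lemma fact_smul (i : ℕ) (v : M₀) :
    (i + 1 : ℕ) • ((algebraMap ℚ R ((Nat.factorial (i+1) : ℚ)⁻¹)) • v)
      = (algebraMap ℚ R ((Nat.factorial i : ℚ)⁻¹)) • v := by
  rw [← Nat.cast_smul_eq_nsmul R, smul_smul]
  congr 1
  have h1 : ((i + 1 : ℕ) : R) = algebraMap ℚ R ((i : ℚ) + 1) := by push_cast; simp
  rw [h1, ← map_mul]
  congr 1
  rw [Nat.factorial_succ]
  have h2 : ((i : ℚ) + 1) ≠ 0 := by positivity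
  have h3 : ((Nat.factorial i : ℚ)) ≠ 0 := Nat.cast_ne_zero.mpr (Nat.factorial_ne_zero i)
  push_cast
  field_simp

lemma inv_smul (i : ℕ) (w v : M₀) (h : (i + 1 : ℕ) • w = v) :
    w = (algebraMap ℚ R (((i : ℚ) + 1)⁻¹)) • v := by
  rw [← h, ← Nat.cast_smul_eq_nsmul R, smul_smul]
  have h1 : ((i + 1 : ℕ) : R) = algebraMap ℚ R ((i : ℚ) + 1) := by push_cast; simp
  rw [h1, ← map_mul]
  have h2 : ((i : ℚ) + 1) ≠ 0 := by positivity
  rw [inv_mul_cancel₀ h2, map_one, one_smul]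

theorem ker_NOp_eq_range_psi (N₀ : M₀ →ₗ[R] M₀) (m : ℕ) (hN : N₀ ^ m = 0) :
    Function.Injective (psiMap R M₀ N₀ m) ∧
    (∀ y : Polynomial R ⊗[R] M₀,
      NOp R M₀ N₀ y = 0 ↔ y ∈ Set.range (psiMap R M₀ N₀ m)) := by
  have hzero : ∀ (x : M₀) (i : ℕ), m ≤ i → ((-N₀) ^ i) x = 0 := by
    intro x i hi
    have hm : (-N₀) ^ m = 0 := by rw [neg_pow, hN, mul_zero]
    have : (-N₀) ^ i = 0 := by
      rw [← Nat.sub_add_cancel hi, pow_add, hm, mul_zero]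
    rw [this]; rfl
  constructor
  · intro a b hab
    have h := congrArg (fun y => EE R M₀ y 0) hab
    simpa [EE_psi] using h
  · intro y
    constructor
    · intro hy
      refine ⟨EE R M₀ y 0, ?_⟩
      have hrec : ∀ i, EE R M₀ y i
          = (algebraMap ℚ R ((Nat.factorial i : ℚ)⁻¹)) • (((-N₀) ^ i) (EE R M₀ y 0)) := by
        intro i
        induction i with
        | zero => simp
        | succ i ih =>
          have h0 := EE_NOp R M₀ N₀ y i
          rw [hy, map_zero] at h0
          have h1 : (i + 1 : ℕ) • EE R M₀ y (i + 1) = -(N₀ (EE R M₀ y i)) := by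
            rw [eq_neg_iff_add_eq_zero, add_comm]
            simpa using h0.symm
          rw [inv_smul R M₀ i _ _ h1, ih, map_smul, ← smul_neg, smul_smul]
          have hs : algebraMap ℚ R (((i : ℚ) + 1)⁻¹) * algebraMap ℚ R ((Nat.factorial i : ℚ)⁻¹)
              = algebraMap ℚ R ((Nat.factorial (i + 1) : ℚ)⁻¹) := by
            rw [← map_mul]
            congr 1
            rw [Nat.factorial_succ]
            push_cast
            rw [mul_inv]
          rw [hs]
          congr 1
          rw [pow_succ']
          simp
      symm
      apply (EE R M₀).injective
      ext i
      rw [EE_psi, hrec i]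
      by_cases him : i ≤ m
      · rw [if_pos him]
      · rw [if_neg him, hzero _ i (le_of_lt (Nat.lt_of_not_le him)), smul_zero]
    · rintro ⟨x, rfl⟩
      apply (EE R M₀).injective
      ext i
      rw [map_zero, Finsupp.coe_zero, Pi.zero_apply, EE_NOp, EE_psi, EE_psi]
      by_cases him : i < m
      · rw [if_pos him.le, if_pos (Nat.succ_le_of_lt him), fact_smul, map_smul, pow_succ']
        simp
      · push_neg at him
        rw [hzero x i him, hzero x (i + 1) (him.trans (Nat.le_succ i))]
        simp only [smul_zero, ite_self, map_zero, smul_zero, add_zero]
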